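/- Let K > 1, α = 1 - 1/K, and let B be a real symmetric positive semidefinite d×d matrix with trace 1 and operator norm at most 1. Then ‖I - αB‖^d ≤ K · det(I - αB), where ‖·‖ denotes the operator norm. -/

import Mathlib

open Matrix Finset
open scoped InnerProductSpace RealInnerProductSpace

lemma weierstrass_prod {ι : Type*} (s : Finset ι) (f : ι → ℝ)
    (h0 : ∀ i ∈ s, 0 ≤ f i) (h1 : ∀ i ∈ s, f i ≤ 1) :
    1 - ∑ i ∈ s, f i ≤ ∏ i ∈ s, (1 - f i) := by
  induction s using Finset.cons_induction with
  | empty => simp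
  | cons a s ha ih =>
    rw [Finset.prod_cons, Finset.sum_cons]
    have hfa0 : 0 ≤ f a := h0 a (Finset.mem_cons_self a s)
    have hfa1 : f a ≤ 1 := h1 a (Finset.mem_cons_self a s)
    have hS : 0 ≤ ∑ i ∈ s, f i :=
      Finset.sum_nonneg fun i hi => h0 i (Finset.mem_cons_of_mem hi)
    have ih' := ih (fun i hi => h0 i (Finset.mem_cons_of_mem hi))
      (fun i hi => h1 i (Finset.mem_cons_of_mem hi))
    nlinarith [mul_le_mul_of_nonneg_left ih' (by linarith : (0:ℝ) ≤ 1 - f a)]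

lemma trace_eq_sum_eigenvalues {d : ℕ} {M : Matrix (Fin d) (Fin d) ℝ} (hM : M.IsHermitian) :
    M.trace = ∑ i, hM.eigenvalues i := by
  conv_lhs => rw [hM.spectral_theorem]
  rw [Unitary.conjStarAlgAut_apply, Matrix.trace_mul_cycle]
  rw [show (star (hM.eigenvectorUnitary : Matrix (Fin d) (Fin d) ℝ)) *
      (hM.eigenvectorUnitary : Matrix (Fin d) (Fin d) ℝ) = 1 from Unitary.coe_star_mul_self _,
    one_mul, Matrix.trace_diagonal]
  simp

lemma norm_toEuclideanCLM_le {d : ℕ} {M : Matrix (Fin d) (Fin d) ℝ} (hM : M.IsHermitian)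
    {c : ℝ} (hc : 0 ≤ c) (h : ∀ i, |hM.eigenvalues i| ≤ c) :
    ‖Matrix.toEuclideanCLM (𝕜 := ℝ) M‖ ≤ c := by
  apply ContinuousLinearMap.opNorm_le_bound _ hc
  intro x
  set b := hM.eigenvectorBasis with hb
  set ν := hM.eigenvalues with hν
  have key : ∀ j, Matrix.toEuclideanCLM (𝕜 := ℝ) M (b j) = ν j • b j := by
    intro j
    apply (WithLp.equiv 2 ((Fin d) → ℝ)).injective
    rw [WithLp.equiv_apply, Matrix.ofLp_toEuclideanCLM]
    simpa using hM.mulVec_eigenvectorBasis j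
  have hx : Matrix.toEuclideanCLM (𝕜 := ℝ) M x
      = ∑ j, (ν j * b.repr x j) • b j := by
    conv_lhs => rw [← b.sum_repr x]
    rw [map_sum]
    congr 1
    ext j
    rw [_root_.map_smul, key j, smul_smul, mul_comm]
  have hrepr : ∀ i, b.repr (Matrix.toEuclideanCLM (𝕜 := ℝ) M x) i = ν i * b.repr x i := by
    intro i
    rw [b.repr_apply_apply, hx]
    exact b.orthonormal.inner_right_fintype _ i
  have h1 : ‖Matrix.toEuclideanCLM (𝕜 := ℝ) M x‖
      = Real.sqrt (∑ i, ‖ν i * b.repr x i‖ ^ 2) := by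
    rw [← b.repr.norm_map, EuclideanSpace.norm_eq]
    congr 1
    exact Finset.sum_congr rfl fun i _ => by rw [hrepr i]
  have h2 : ‖x‖ = Real.sqrt (∑ i, ‖b.repr x i‖ ^ 2) := by
    rw [← b.repr.norm_map, EuclideanSpace.norm_eq]
  rw [h1, h2, ← Real.sqrt_sq hc, ← Real.sqrt_mul (by positivity)]
  apply Real.sqrt_le_sqrt
  rw [Finset.mul_sum]
  apply Finset.sum_le_sum
  intro i _
  have : |ν i| ≤ c := h i
  rw [norm_mul]
  have h3 : ‖ν i‖ ≤ c := this
  calc (‖ν i‖ * ‖b.repr x i‖) ^ 2 = ‖ν i‖^2 * ‖b.repr x i‖^2 := by ring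
    _ ≤ c^2 * ‖b.repr x i‖^2 := by
        apply mul_le_mul_of_nonneg_right _ (by positivity)
        exact pow_le_pow_left₀ (norm_nonneg _) h3 2

theorem distortion_inequality (d : ℕ) (K : ℝ) (hK : 1 < K) (α : ℝ) (hα : α = 1 - 1 / K)
    (B : Matrix (Fin d) (Fin d) ℝ) (hB : B.PosSemidef) (htr : B.trace = 1)
    (hnorm : ‖Matrix.toEuclideanCLM (𝕜 := ℝ) B‖ ≤ 1) :
    ‖Matrix.toEuclideanCLM (𝕜 := ℝ) ((1 - α • B : Matrix (Fin d) (Fin d) ℝ))‖ ^ d ≤ K * (1 - α • B).det := by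
  have hK0 : (0:ℝ) < K := lt_trans one_pos hK
  have hK1 : 1/K < 1 := by rw [div_lt_one hK0]; exact hK
  have hK2 : 0 < 1/K := by positivity
  have hα0 : 0 ≤ α := by rw [hα]; linarith
  have hα1 : α < 1 := by rw [hα]; linarith
  set M : Matrix (Fin d) (Fin d) ℝ := 1 - α • B with hM_def
  have hM : M.IsHermitian := by
    apply Matrix.IsHermitian.sub Matrix.isHermitian_one
    show (α • B)ᴴ = α • B
    rw [Matrix.conjTranspose_smul, hB.1, star_trivial]
  -- Q j ∈ [0,1] and eigenvalue formula
  have hQ : ∀ j, hM.eigenvalues j = 1 - α * ((star (⇑(hM.eigenvectorBasis j))) ⬝ᵥ (B *ᵥ ⇑(hM.eigenvectorBasis j))) := by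
    intro j
    rw [hM.eigenvalues_eq j]
    have hMv : M *ᵥ ⇑(hM.eigenvectorBasis j)
        = ⇑(hM.eigenvectorBasis j) - α • (B *ᵥ ⇑(hM.eigenvectorBasis j)) := by
      simp only [hM_def, Matrix.sub_mulVec, Matrix.one_mulVec, Matrix.smul_mulVec]
    have hvnorm : (star ⇑(hM.eigenvectorBasis j)) ⬝ᵥ ⇑(hM.eigenvectorBasis j) = 1 := by
      have h1 : ⟪hM.eigenvectorBasis j, hM.eigenvectorBasis j⟫_ℝ = 1 := by
        rw [real_inner_self_eq_norm_sq, hM.eigenvectorBasis.orthonormal.1 j]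
        norm_num
      rw [EuclideanSpace.inner_eq_star_dotProduct] at h1
      exact h1
    rw [hMv, dotProduct_sub, hvnorm, dotProduct_smul]
    simp [smul_eq_mul]
  have hQ0 : ∀ j, 0 ≤ (star (⇑(hM.eigenvectorBasis j))) ⬝ᵥ (B *ᵥ ⇑(hM.eigenvectorBasis j)) := by
    intro j
    have := hB.dotProduct_mulVec_nonneg (⇑(hM.eigenvectorBasis j))
    simpa using this
  have hQ1 : ∀ j, (star (⇑(hM.eigenvectorBasis j))) ⬝ᵥ (B *ᵥ ⇑(hM.eigenvectorBasis j)) ≤ 1 := by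
    intro j
    set v := hM.eigenvectorBasis j with hv
    have h1 : (star (⇑v)) ⬝ᵥ (B *ᵥ ⇑v) = ⟪v, Matrix.toEuclideanCLM (𝕜 := ℝ) B v⟫_ℝ := by
      rw [EuclideanSpace.inner_eq_star_dotProduct, Matrix.ofLp_toEuclideanCLM]
      exact dotProduct_comm _ _
    rw [h1]
    have hv1 : ‖v‖ = 1 := hM.eigenvectorBasis.orthonormal.1 j
    have h2 := real_inner_le_norm v (Matrix.toEuclideanCLM (𝕜 := ℝ) B v)
    have h3 := ContinuousLinearMap.le_opNorm (Matrix.toEuclideanCLM (𝕜 := ℝ) B) v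
    rw [hv1] at h2 h3
    simp only [one_mul, mul_one] at h2 h3
    linarith
  have hev_le : ∀ j, hM.eigenvalues j ≤ 1 := by
    intro j; rw [hQ j]
    have := hQ0 j
    nlinarith
  have hev_ge : ∀ j, 1 - α ≤ hM.eigenvalues j := by
    intro j; rw [hQ j]
    have := hQ1 j
    nlinarith
  -- trace of M
  have htrM : M.trace = (d : ℝ) - α := by
    rw [hM_def, Matrix.trace_sub, Matrix.trace_smul, htr, Matrix.trace_one]
    simp
  have hsum : ∑ j, hM.eigenvalues j = (d : ℝ) - α := by
    rw [← trace_eq_sum_eigenvalues hM, htrM]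
  -- determinant lower bound
  have hdet : 1 - α ≤ M.det := by
    have hdet_eq : M.det = ∏ j, hM.eigenvalues j := by
      have := hM.det_eq_prod_eigenvalues
      simpa using this
    rw [hdet_eq]
    have key := weierstrass_prod Finset.univ (fun j => 1 - hM.eigenvalues j)
      (fun j _ => by linarith [hev_le j])
      (fun j _ => by linarith [hev_ge j])
    have hsum' : ∑ j, (1 - hM.eigenvalues j) = α := by
      rw [Finset.sum_sub_distrib, hsum]
      simp
    rw [hsum'] at key
    calc (1:ℝ) - α ≤ ∏ j, (1 - (1 - hM.eigenvalues j)) := key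
      _ = ∏ j, hM.eigenvalues j := by simp
  -- norm bound
  have hnormM : ‖Matrix.toEuclideanCLM (𝕜 := ℝ) M‖ ≤ 1 := by
    apply norm_toEuclideanCLM_le hM zero_le_one
    intro i
    rw [abs_le]
    constructor
    · have := hev_ge i; linarith
    · exact hev_le i
  calc ‖Matrix.toEuclideanCLM (𝕜 := ℝ) M‖ ^ d ≤ 1 ^ d :=
        pow_le_pow_left₀ (norm_nonneg _) hnormM d
    _ = 1 := one_pow d
    _ ≤ K * M.det := by
        have : K * (1 - α) ≤ K * M.det := mul_le_mul_of_nonneg_left hdet (le_of_lt hK0)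
        have h1 : K * (1 - α) = 1 := by rw [hα]; field_simp; ring
        linarith
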